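/- arXiv:2111.05780 — 2 statements merged into one kernel-verified Lean document; each statement's English description precedes it below -/
import Mathlib

section
/- Every finite tree T has a Hamiltonian path in its cube T³; equivalently, the vertices of T can be ordered v_1,...,v_N so that consecutive vertices are at distance at most 3 in T. -/
/-- The cube of a graph `G`: same vertex set, with an edge between two distinct
vertices whenever there is a path with at most `3` edges between them in `G`. -/
def SimpleGraph.cube {V : Type*} (G : SimpleGraph V) : SimpleGraph V :=
  SimpleGraph.fromRel (fun u v => G.Reachable u v ∧ G.dist u v ≤ 3)

section TreeCubeAux

set_option linter.unusedSectionVars false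
set_option maxHeartbeats 1000000

namespace TreeCube

open SimpleGraph List

variable {V : Type*} [DecidableEq V] {G : SimpleGraph V}

/-- Splitting a walk at a support vertex bounds the sum of distances. -/
lemma dist_add_dist_le_length {x y z : V} (p : G.Walk x y) (hz : z ∈ p.support) :
    G.dist x z + G.dist z y ≤ p.length := by
  have h := p.take_spec hz
  calc G.dist x z + G.dist z y
      ≤ (p.takeUntil z hz).length + (p.dropUntil z hz).length :=
        Nat.add_le_add (SimpleGraph.dist_le _) (SimpleGraph.dist_le _)
    _ = p.length := by rw [← SimpleGraph.Walk.length_append, h]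

lemma not_mem_geodesic {x u v : V} (huv : G.Adj u v) (p : G.Walk x u)
    (hlen : p.length = G.dist x u) (hle : G.dist x u ≤ G.dist x v) : v ∉ p.support := by
  intro hv
  have h1 := dist_add_dist_le_length p hv
  have h2 : G.dist v u = 1 := SimpleGraph.dist_eq_one_iff_adj.2 huv.symm
  omega

/-- Extend a geodesic to `u` by the edge `uv`, when `v` is farther. -/
lemma geodesic_concat {x u v : V} (huv : G.Adj u v) (p : G.Walk x u) (hp : p.IsPath)
    (hlen : p.length = G.dist x u) (hle : G.dist x u ≤ G.dist x v) :
    ∃ q : G.Walk x v, q.IsPath ∧ q.length = p.length + 1 ∧ ∀ z ∈ p.support, z ∈ q.support := by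
  have hv : v ∉ p.support := not_mem_geodesic huv p hlen hle
  refine ⟨(SimpleGraph.Walk.cons huv.symm p.reverse).reverse, ?_, ?_, ?_⟩
  · apply SimpleGraph.Walk.IsPath.reverse
    exact hp.reverse.cons (by simpa [SimpleGraph.Walk.support_reverse] using hv)
  · simp
  · intro z hzp
    simp [SimpleGraph.Walk.support_reverse, SimpleGraph.Walk.support_cons]
    tauto

/-- In a tree, each vertex is strictly closer to exactly one endpoint of an edge. -/
lemma side_dichotomy (hG : G.IsTree) {u v : V} (huv : G.Adj u v) (x : V) :
    G.dist x u + 1 = G.dist x v ∨ G.dist x v + 1 = G.dist x u := by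
  have hc := hG.isConnected
  have hduv : G.dist u v = 1 := SimpleGraph.dist_eq_one_iff_adj.2 huv
  have hdvu : G.dist v u = 1 := SimpleGraph.dist_eq_one_iff_adj.2 huv.symm
  have h1 : G.dist x v ≤ G.dist x u + 1 := by
    have := hc.dist_triangle (u := x) (v := u) (w := v); omega
  have h2 : G.dist x u ≤ G.dist x v + 1 := by
    have := hc.dist_triangle (u := x) (v := v) (w := u); omega
  have hne : G.dist x u ≠ G.dist x v := by
    intro heq
    obtain ⟨p, hp, hplen⟩ := hc.exists_path_of_dist x u
    obtain ⟨q, hq, hqlen⟩ := hc.exists_path_of_dist x v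
    obtain ⟨p', hp', hp'len, _⟩ := geodesic_concat huv p hp hplen (le_of_eq heq)
    have huniq := hG.IsAcyclic.path_unique ⟨p', hp'⟩ ⟨q, hq⟩
    have : p'.length = q.length := by rw [congrArg (fun r : G.Path x v => r.1.length) huniq]
    omega
  omega

/-- If the edge `ab` crosses the sides of edge `uv`, then `{a,b} = {u,v}`. -/
lemma adj_cross (hG : G.IsTree) {u v : V} (huv : G.Adj u v) {a b : V} (hab : G.Adj a b)
    (ha : G.dist a u + 1 = G.dist a v) (hb : G.dist b v + 1 = G.dist b u) :
    a = u ∧ b = v := by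
  have hc := hG.isConnected
  have hdab : G.dist a b = 1 := SimpleGraph.dist_eq_one_iff_adj.2 hab
  have hdba : G.dist b a = 1 := SimpleGraph.dist_eq_one_iff_adj.2 hab.symm
  have hkm : G.dist a u = G.dist b v := by
    have t1 := hc.dist_triangle (u := a) (v := b) (w := v)
    have t2 := hc.dist_triangle (u := b) (v := a) (w := u)
    omega
  obtain ⟨p, hp, hplen⟩ := hc.exists_path_of_dist a u
  obtain ⟨q, hq, hqlen⟩ := hc.exists_path_of_dist b v
  obtain ⟨p', hp', hp'len, hp'mem⟩ := geodesic_concat huv p hp hplen (by omega)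
  have hanq : a ∉ q.support := by
    intro haq
    have := dist_add_dist_le_length q haq
    have : G.dist a v = G.dist a u + 1 := by omega
    omega
  have hq' : (SimpleGraph.Walk.cons hab q).IsPath := hq.cons hanq
  have huniq := hG.IsAcyclic.path_unique ⟨p', hp'⟩ ⟨SimpleGraph.Walk.cons hab q, hq'⟩
  have hwalk : p' = SimpleGraph.Walk.cons hab q := congrArg (fun r : G.Path a v => r.1) huniq
  have hunq : u ∉ q.support := not_mem_geodesic huv.symm q hqlen (by omega)
  have humem : u ∈ p'.support := hp'mem u p.end_mem_support
  rw [hwalk] at humem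
  rw [SimpleGraph.Walk.support_cons] at humem
  have hau : a = u := by
    rcases List.mem_cons.mp humem with h | h
    · exact h.symm
    · exact absurd h hunq
  refine ⟨hau, ?_⟩
  have : G.dist b v = 0 := by rw [← hkm, hau, SimpleGraph.dist_self]
  exact (hc.dist_eq_zero_iff.mp this)

/-- Along a walk, a property that holds at the start and fails at the end
must fail across some edge of the walk. -/
lemma exists_cross (P : V → Prop) :
    ∀ {x y : V} (p : G.Walk x y), P x → ¬ P y →
      ∃ a b, G.Adj a b ∧ P a ∧ ¬ P b ∧ a ∈ p.support := by
  intro x y p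
  induction p with
  | nil => intro hx hy; exact absurd hx hy
  | @cons x' b y' h q ih =>
    intro hx hy
    by_cases hb : P b
    · obtain ⟨a, c, h1, h2, h3, h4⟩ := ih hb hy
      exact ⟨a, c, h1, h2, h3, by simp [SimpleGraph.Walk.support_cons]; tauto⟩
    · exact ⟨x', b, h, hx, hb, by simp⟩

/-- Distance formula across the edge `uv` in a tree. -/
lemma dist_cross (hG : G.IsTree) {u v : V} (huv : G.Adj u v) {x y : V}
    (hx : G.dist x u + 1 = G.dist x v) (hy : G.dist y v + 1 = G.dist y u) :
    G.dist x y = G.dist x u + 1 + G.dist y v := by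
  have hc := hG.isConnected
  have hduv : G.dist u v = 1 := SimpleGraph.dist_eq_one_iff_adj.2 huv
  obtain ⟨p, hp, hlen⟩ := hc.exists_path_of_dist x y
  have hPy : ¬ (G.dist y u + 1 = G.dist y v) := by omega
  obtain ⟨a, b, hab, ha, hb, hmem⟩ :=
    exists_cross (fun z => G.dist z u + 1 = G.dist z v) p hx hPy
  have hb' : G.dist b v + 1 = G.dist b u := by
    rcases side_dichotomy hG huv b with h | h
    · exact absurd h hb
    · exact h
  obtain ⟨hau, _⟩ := adj_cross hG huv hab ha hb'
  subst hau
  have h1 : G.dist x a + G.dist a y ≤ G.dist x y := by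
    have := dist_add_dist_le_length p hmem; omega
  have h2 : G.dist a y = G.dist y a := SimpleGraph.dist_comm ..
  have h3 : G.dist x y ≤ G.dist x a + G.dist a y := by
    have t1 := hc.dist_triangle (u := x) (v := a) (w := y)
    omega
  have h4 : G.dist a y ≤ G.dist a v + G.dist v y := hc.dist_triangle
  have h5 : G.dist a v = 1 := SimpleGraph.dist_eq_one_iff_adj.2 huv
  have h6 : G.dist v y = G.dist y v := SimpleGraph.dist_comm ..
  omega


/-- Metric convexity of a finite set of vertices. -/
def Conv (G : SimpleGraph V) (s : Finset V) : Prop :=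
  ∀ x ∈ s, ∀ y ∈ s, ∀ z : V, G.dist x z + G.dist z y = G.dist x y → z ∈ s

lemma conv_filter (hG : G.IsTree) {s : Finset V} (hs : Conv G s) {u v : V} (huv : G.Adj u v) :
    Conv G (s.filter fun x => G.dist x u < G.dist x v) := by
  intro x hx y hy z hz
  rw [Finset.mem_filter] at hx hy ⊢
  refine ⟨hs x hx.1 y hy.1 z hz, ?_⟩
  rcases side_dichotomy hG huv z with h | h
  · omega
  · exfalso
    have hxs : G.dist x u + 1 = G.dist x v := by
      rcases side_dichotomy hG huv x with h' | h'
      · exact h'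
      · omega
    have hys : G.dist y u + 1 = G.dist y v := by
      rcases side_dichotomy hG huv y with h' | h'
      · exact h'
      · omega
    have h1 := dist_cross hG huv hxs h
    have h2 := dist_cross hG huv hys h
    have h3 : G.dist x y ≤ G.dist x u + G.dist u y := hG.isConnected.dist_triangle
    have h4 : G.dist u y = G.dist y u := SimpleGraph.dist_comm ..
    have h5 : G.dist z y = G.dist y z := SimpleGraph.dist_comm ..
    omega

lemma exists_adj_between (hG : G.IsTree) {t : Finset V} (ht : Conv G t) {u x : V}
    (hu : u ∈ t) (hx : x ∈ t) (hne : x ≠ u) : ∃ a ∈ t, G.Adj u a := by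
  obtain ⟨p, hp, hlen⟩ := hG.isConnected.exists_path_of_dist u x
  cases p with
  | nil => exact absurd rfl hne
  | @cons _ a _ h q =>
    refine ⟨a, ht u hu x hx a ?_, h⟩
    have h1 : G.dist u a = 1 := SimpleGraph.dist_eq_one_iff_adj.2 h
    have h2 : G.dist a x ≤ q.length := SimpleGraph.dist_le q
    have h3 : G.dist u x ≤ G.dist u a + G.dist a x := hG.isConnected.dist_triangle
    have h4 : (SimpleGraph.Walk.cons h q).length = q.length + 1 := by simp
    omega

/-- The main recursion: a convex set with a distinguished edge `uv` can be listed
from `u` to `v` with consecutive distances at most 3. -/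
lemma key (hG : G.IsTree) : ∀ n (s : Finset V), s.card ≤ n → Conv G s →
    ∀ u v : V, u ∈ s → v ∈ s → G.Adj u v →
    ∃ l : List V, l.Nodup ∧ l.toFinset = s ∧ l.Chain' (fun a b => G.dist a b ≤ 3) ∧
      l.head? = some u ∧ l.getLast? = some v := by
  intro n
  induction n with
  | zero =>
    intro s hcard _ u v hu _ _
    rw [Nat.le_zero, Finset.card_eq_zero] at hcard
    exact absurd (hcard ▸ hu) (Finset.notMem_empty u)
  | succ n ih =>
    intro s hcard hconv u v hu hv huv
    have hc := hG.isConnected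
    set su := s.filter (fun x => G.dist x u < G.dist x v) with hsu_def
    set sv := s.filter (fun x => G.dist x v < G.dist x u) with hsv_def
    have hduv : G.dist u v = 1 := SimpleGraph.dist_eq_one_iff_adj.2 huv
    have hdvu : G.dist v u = 1 := SimpleGraph.dist_eq_one_iff_adj.2 huv.symm
    have hust : u ∈ su := by
      rw [hsu_def, Finset.mem_filter]; exact ⟨hu, by simp [hduv]⟩
    have hvst : v ∈ sv := by
      rw [hsv_def, Finset.mem_filter]; exact ⟨hv, by simp [hdvu]⟩
    have hvnotu : v ∉ su := by
      rw [hsu_def, Finset.mem_filter]; simp [hdvu, SimpleGraph.dist_self]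
    have hunotv : u ∉ sv := by
      rw [hsv_def, Finset.mem_filter]; simp [hduv, SimpleGraph.dist_self]
    have hconvu : Conv G su := conv_filter hG hconv huv
    have hconvv : Conv G sv := conv_filter hG hconv huv.symm
    have hcardu : su.card ≤ n := by
      have : su ⊂ s := Finset.ssubset_iff_of_subset (Finset.filter_subset _ _) |>.2 ⟨v, hv, hvnotu⟩
      have := Finset.card_lt_card this
      omega
    have hcardv : sv.card ≤ n := by
      have : sv ⊂ s := Finset.ssubset_iff_of_subset (Finset.filter_subset _ _) |>.2 ⟨u, hu, hunotv⟩
      have := Finset.card_lt_card this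
      omega
    have hlu : ∃ lu : List V, lu.Nodup ∧ lu.toFinset = su ∧
        lu.Chain' (fun a b => G.dist a b ≤ 3) ∧ lu.head? = some u ∧
        ∃ w, lu.getLast? = some w ∧ G.dist w u ≤ 1 := by
      by_cases hsingle : ∀ x ∈ su, x = u
      · refine ⟨[u], by simp, ?_, by simp [List.Chain'], by simp, u, by simp, by simp [SimpleGraph.dist_self]⟩
        have : su = {u} := Finset.eq_singleton_iff_unique_mem.2 ⟨hust, hsingle⟩
        simp [this]
      · push_neg at hsingle
        obtain ⟨x, hx, hxu⟩ := hsingle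
        obtain ⟨a, hat, hadj⟩ := exists_adj_between hG hconvu hust hx hxu
        obtain ⟨l, h1, h2, h3, h4, h5⟩ := ih su hcardu hconvu u a hust hat hadj
        exact ⟨l, h1, h2, h3, h4, a, h5,
          le_of_eq (by rw [SimpleGraph.dist_comm]; exact SimpleGraph.dist_eq_one_iff_adj.2 hadj)⟩
    have hlv : ∃ lv : List V, lv.Nodup ∧ lv.toFinset = sv ∧
        lv.Chain' (fun a b => G.dist a b ≤ 3) ∧
        (∃ w, lv.head? = some w ∧ G.dist v w ≤ 1) ∧ lv.getLast? = some v := by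
      by_cases hsingle : ∀ x ∈ sv, x = v
      · refine ⟨[v], by simp, ?_, by simp [List.Chain'], ⟨v, by simp, by simp [SimpleGraph.dist_self]⟩, by simp⟩
        have : sv = {v} := Finset.eq_singleton_iff_unique_mem.2 ⟨hvst, hsingle⟩
        simp [this]
      · push_neg at hsingle
        obtain ⟨x, hx, hxv⟩ := hsingle
        obtain ⟨b, hbt, hadj⟩ := exists_adj_between hG hconvv hvst hx hxv
        obtain ⟨l, h1, h2, h3, h4, h5⟩ := ih sv hcardv hconvv b v hbt hvst hadj.symm
        exact ⟨l, h1, h2, h3, ⟨b, h4,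
          le_of_eq (SimpleGraph.dist_eq_one_iff_adj.2 hadj)⟩, h5⟩
    obtain ⟨lu, hnu, htu, hcu, hhu, w1, hlastu, hw1⟩ := hlu
    obtain ⟨lv, hnv, htv, hcv, ⟨w2, hheadv, hw2⟩, hlastv⟩ := hlv
    have hlune : lu ≠ [] := by intro h; rw [h] at hhu; simp at hhu
    have hlvne : lv ≠ [] := by intro h; rw [h] at hlastv; simp at hlastv
    have hdisj : lu.Disjoint lv := by
      intro z hz1 hz2
      have m1 : z ∈ su := htu ▸ List.mem_toFinset.2 hz1
      have m2 : z ∈ sv := htv ▸ List.mem_toFinset.2 hz2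
      rw [hsu_def, Finset.mem_filter] at m1
      rw [hsv_def, Finset.mem_filter] at m2
      omega
    refine ⟨lu ++ lv, hnu.append hnv hdisj, ?_, ?_, ?_, ?_⟩
    · rw [List.toFinset_append, htu, htv]
      apply Finset.Subset.antisymm
      · exact Finset.union_subset (Finset.filter_subset _ _) (Finset.filter_subset _ _)
      · intro z hz
        rw [Finset.mem_union]
        rcases side_dichotomy hG huv z with h | h
        · left; rw [hsu_def, Finset.mem_filter]; exact ⟨hz, by omega⟩
        · right; rw [hsv_def, Finset.mem_filter]; exact ⟨hz, by omega⟩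
    · refine hcu.append hcv ?_
      intro a ha b hb
      rw [Option.mem_def, hlastu, Option.some.injEq] at ha
      rw [Option.mem_def, hheadv, Option.some.injEq] at hb
      have t1 : G.dist a b ≤ G.dist a u + G.dist u b := hc.dist_triangle
      have t2 : G.dist u b ≤ G.dist u v + G.dist v b := hc.dist_triangle
      have e1 : G.dist a u ≤ 1 := ha ▸ hw1
      have e2 : G.dist v b ≤ 1 := hb ▸ hw2
      omega
    · rw [List.head?_append_of_ne_nil _ hlune]; exact hhu
    · rw [List.getLast?_append_of_ne_nil _ hlvne]; exact hlastv


lemma exists_walk_of_chain {W : Type*} (H : SimpleGraph W) :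
    ∀ (c : List W) (u : W), List.Chain H.Adj u c →
      ∃ w, ∃ p : H.Walk u w, p.support = u :: c := by
  intro c
  induction c with
  | nil => exact fun u _ => ⟨u, SimpleGraph.Walk.nil, by simp⟩
  | cons b t ih =>
    intro u hch
    rw [List.Chain, List.chain_cons] at hch
    obtain ⟨w, p, hp⟩ := ih b hch.2
    exact ⟨w, SimpleGraph.Walk.cons hch.1 p, by simp [hp]⟩

/-- The full ordering of a finite tree. -/
lemma master [Fintype V] (hG : G.IsTree) :
    ∃ l : List V, l.Nodup ∧ l.toFinset = Finset.univ ∧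
      l.Chain' (fun a b => G.dist a b ≤ 3) := by
  have hne : Nonempty V := hG.isConnected.nonempty
  obtain ⟨u⟩ := hne
  by_cases hsingle : ∀ x : V, x = u
  · refine ⟨[u], by simp, ?_, by simp [List.Chain']⟩
    ext z; simp [hsingle z]
  · push_neg at hsingle
    obtain ⟨x, hx⟩ := hsingle
    have hconv : Conv G Finset.univ := fun _ _ _ _ _ _ => Finset.mem_univ _
    obtain ⟨a, -, hadj⟩ :=
      exists_adj_between hG hconv (Finset.mem_univ u) (Finset.mem_univ x) hx
    obtain ⟨l, h1, h2, h3, -, -⟩ := key hG Finset.univ.card Finset.univ le_rfl hconv u a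
      (Finset.mem_univ u) (Finset.mem_univ a) hadj
    exact ⟨l, h1, h2, h3⟩

theorem tree_cube_hamiltonian_path' {V : Type*} [Fintype V] [DecidableEq V]
    (G : SimpleGraph V) (hG : G.IsTree) :
    (∃ (u v : V) (p : G.cube.Walk u v), p.IsHamiltonian) ∧
    ∃ f : Fin (Fintype.card V) ≃ V,
      ∀ i j : Fin (Fintype.card V), (j : ℕ) = (i : ℕ) + 1 →
        G.dist (f i) (f j) ≤ 3 := by
  obtain ⟨l, hnd, htf, hch⟩ := master hG
  have hlen : l.length = Fintype.card V := by
    rw [← List.toFinset_card_of_nodup hnd, htf, Finset.card_univ]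
  constructor
  · -- Hamiltonian path in the cube
    have hchc : l.Chain' G.cube.Adj := by
      rw [List.Chain', List.isChain_iff_getElem] at hch ⊢
      intro i h
      have hne : l.get ⟨i, by omega⟩ ≠ l.get ⟨i + 1, by omega⟩ := by
        intro he
        have := List.nodup_iff_injective_get.mp hnd he
        simp [Fin.ext_iff] at this
      exact (SimpleGraph.fromRel_adj _ _ _).2
        ⟨hne, Or.inl ⟨hG.isConnected.preconnected _ _, hch i h⟩⟩
    cases l with
    | nil =>
      exfalso
      obtain ⟨z⟩ := hG.isConnected.nonempty
      have : z ∈ ([] : List V).toFinset := by rw [htf]; exact Finset.mem_univ _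
      simp at this
    | cons u0 rest =>
      have hchain : List.Chain G.cube.Adj u0 rest := hchc
      obtain ⟨w, p, hp⟩ := exists_walk_of_chain G.cube rest u0 hchain
      refine ⟨u0, w, p, fun a => ?_⟩
      rw [hp]
      exact List.count_eq_one_of_mem hnd (by rw [← List.mem_toFinset, htf]; exact Finset.mem_univ a)
  · -- the ordering
    set f0 : Fin (Fintype.card V) → V :=
      fun i => l.get ⟨i.val, by rw [hlen]; exact i.isLt⟩ with hf0
    have hinj : Function.Injective f0 := by
      intro i j h
      have h2 := List.nodup_iff_injective_get.mp hnd h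
      rw [Fin.mk.injEq] at h2
      exact Fin.ext h2
    have hbij : Function.Bijective f0 :=
      (Fintype.bijective_iff_injective_and_card f0).2 ⟨hinj, by simp⟩
    refine ⟨Equiv.ofBijective f0 hbij, ?_⟩
    intro i j hij
    have hch' := List.isChain_iff_getElem.mp hch
    have hij' : (i : ℕ) < l.length - 1 := by
      have := j.isLt; omega
    have hd := hch' i.val (by omega)
    have e1 : (Equiv.ofBijective f0 hbij) i = l.get ⟨i.val, by omega⟩ := rfl
    have e2 : (Equiv.ofBijective f0 hbij) j = l.get ⟨i.val + 1, by omega⟩ := by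
      show f0 j = _
      rw [hf0]
      simp only [hij]
    rw [e1, e2]
    exact hd


end TreeCube

end TreeCubeAux

/-- Every finite tree has a Hamiltonian path in its cube; equivalently, its
vertices can be ordered so that consecutive vertices are at distance at most
`3` in the tree. -/
theorem tree_cube_hamiltonian_path {V : Type*} [Fintype V] [DecidableEq V]
    (G : SimpleGraph V) (hG : G.IsTree) :
    (∃ (u v : V) (p : G.cube.Walk u v), p.IsHamiltonian) ∧
    ∃ f : Fin (Fintype.card V) ≃ V,
      ∀ i j : Fin (Fintype.card V), (j : ℕ) = (i : ℕ) + 1 →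
        G.dist (f i) (f j) ≤ 3 :=
  TreeCube.tree_cube_hamiltonian_path' G hG
end

section
/- Let P be a set of k·n points in a metric space partitioned into n tuples A_1,...,A_n of size k, and let λ* be the minimum over all families of k vertex-disjoint trees (each containing exactly one point of every tuple) of the maximum edge length. If T is a minimum spanning tree of P with maximum edge weight λ(T), and some tuple A_i is entirely contained in one component of T minus its heaviest edge, then λ* ≥ λ(T). -/
section
open SimpleGraph

private lemma walk_crossing {α : Type*} {G : SimpleGraph α} (Pr : α → Prop) :
    ∀ {a b : α}, G.Walk a b → Pr a → ¬Pr b → ∃ c d, G.Adj c d ∧ Pr c ∧ ¬Pr d := by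
  intro a b w
  induction w with
  | nil => intro ha hb; exact absurd ha hb
  | @cons u v z h w ih =>
    intro ha hb
    by_cases hv : Pr v
    · exact ih hv hb
    · exact ⟨u, v, h, ha, hv⟩

private lemma tree_split_aux {V : Type*} {T : SimpleGraph V} {x y : V} :
    ∀ {z t : V}, T.Walk z t →
      ((T.deleteEdges {s(x, y)}).Reachable x t ∨ (T.deleteEdges {s(x, y)}).Reachable y t) →
      ((T.deleteEdges {s(x, y)}).Reachable x z ∨ (T.deleteEdges {s(x, y)}).Reachable y z) := by
  intro z t w
  induction w with
  | nil => exact id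
  | @cons u v _ h _ ih =>
    intro ht
    have hv := ih ht
    by_cases he : s(u, v) = s(x, y)
    · rcases Sym2.eq_iff.mp he with ⟨hu, _⟩ | ⟨hu, _⟩
      · subst hu; exact Or.inl (Reachable.refl _)
      · subst hu; exact Or.inr (Reachable.refl _)
    · have hadj : (T.deleteEdges {s(x, y)}).Adj u v := by
        simp only [deleteEdges_adj, Set.mem_singleton_iff]
        exact ⟨h, he⟩
      rcases hv with h1 | h1
      · exact Or.inl (h1.trans hadj.symm.reachable)
      · exact Or.inr (h1.trans hadj.symm.reachable)

private lemma tree_split {V : Type*} {T : SimpleGraph V} {x y : V} {z : V}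
    (w : T.Walk z x) :
    (T.deleteEdges {s(x, y)}).Reachable x z ∨ (T.deleteEdges {s(x, y)}).Reachable y z :=
  tree_split_aux w (Or.inl (Reachable.refl _))

end

/-- Let `P` be a metric space of `k * n` points partitioned into `n` tuples of
size `k`, let `T` be a minimum spanning tree with heaviest edge `{x, y}`, and
suppose some tuple is entirely contained in the component of `x` in `T` minus
`{x, y}`.  Then every feasible solution of the `k`-DBST problem (a family of
`k` vertex-disjoint trees, each containing exactly one point of every tuple)
has an edge of length at least `dist x y`; that is, `λ* ≥ λ(T)`. -/
theorem dbst_bottleneck_lower_bound {V : Type*} [MetricSpace V] [Fintype V]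
    [DecidableEq V] (k n : ℕ) (hk : 0 < k) (hn : 0 < n)
    (hcardV : Fintype.card V = k * n)
    (A : Fin n → Finset V)
    (hAcard : ∀ i, (A i).card = k)
    (hAdisj : ∀ i j, i ≠ j → Disjoint (A i) (A j))
    (hAcover : Finset.univ.biUnion A = Finset.univ)
    (T : SimpleGraph V) (hT : T.IsTree)
    (hmin : ∀ T' : SimpleGraph V, T'.IsTree →
      ∑ e ∈ T.edgeSet.toFinite.toFinset,
          Sym2.lift ⟨fun a b => dist a b, fun a b => dist_comm a b⟩ e ≤
      ∑ e ∈ T'.edgeSet.toFinite.toFinset,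
          Sym2.lift ⟨fun a b => dist a b, fun a b => dist_comm a b⟩ e)
    (x y : V) (hxy : T.Adj x y)
    (hmax : ∀ a b, T.Adj a b → dist a b ≤ dist x y)
    (i₀ : Fin n) (hi₀ : ∀ p ∈ A i₀, (T.deleteEdges {s(x, y)}).Reachable x p) :
    ∀ (Q : Fin k → Finset V),
      (∀ a b, a ≠ b → Disjoint (Q a) (Q b)) →
      (∀ a i, ((Q a) ∩ (A i)).card = 1) →
      ∀ (H : (a : Fin k) → SimpleGraph {z // z ∈ Q a}),
        (∀ a, (H a).IsTree) →
        ∃ (a : Fin k) (u v : {z // z ∈ Q a}),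
          (H a).Adj u v ∧ dist x y ≤ dist u.1 v.1 := by
  classical
  intro Q hQdisj hQA H hHtree
  set f : Sym2 V → ℝ := Sym2.lift ⟨fun a b => dist a b, fun a b => dist_comm a b⟩ with hf
  set D := T.deleteEdges {s(x, y)} with hD
  have hne : Nonempty V := by
    have : 0 < Fintype.card V := hcardV ▸ Nat.mul_pos hk hn
    exact Fintype.card_pos_iff.mp this
  -- y is not reachable from x after deleting the edge
  have hbridge : T.IsBridge s(x, y) :=
    (SimpleGraph.isAcyclic_iff_forall_adj_isBridge.mp hT.IsAcyclic) hxy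
  have hynR : ¬ D.Reachable x y := (SimpleGraph.isBridge_iff.mp hbridge)
  -- the Q a partition V
  have hQcard : ∀ a, (Q a).card = n := by
    intro a
    have hrw : Q a = Finset.univ.biUnion (fun i => Q a ∩ A i) := by
      ext z
      simp only [Finset.mem_biUnion, Finset.mem_univ, true_and, Finset.mem_inter]
      constructor
      · intro hz
        have : z ∈ Finset.univ.biUnion A := hAcover ▸ Finset.mem_univ z
        rcases Finset.mem_biUnion.mp this with ⟨i, _, hi⟩
        exact ⟨i, hz, hi⟩
      · rintro ⟨i, hz, _⟩; exact hz
    rw [hrw, Finset.card_biUnion, Finset.sum_congr rfl (fun i _ => hQA a i)]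
    · simp
    · intro i _ j _ hij
      exact (hAdisj i j hij).mono Finset.inter_subset_right Finset.inter_subset_right
  have hQcover : Finset.univ.biUnion Q = Finset.univ := by
    apply Finset.eq_univ_of_card
    rw [Finset.card_biUnion (fun a _ b _ hab => hQdisj a b hab)]
    simp only [hQcard, Finset.sum_const, Finset.card_univ, smul_eq_mul, Fintype.card_fin]
    rw [hcardV]
  -- y belongs to some Q a
  obtain ⟨a, _, hyQ⟩ := Finset.mem_biUnion.mp (hQcover ▸ Finset.mem_univ y)
  -- the representative of A i₀ in Q a
  obtain ⟨p, hp⟩ := Finset.card_eq_one.mp (hQA a i₀)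
  have hpmem : p ∈ Q a ∩ A i₀ := hp ▸ Finset.mem_singleton_self p
  have hpQ : p ∈ Q a := (Finset.mem_inter.mp hpmem).1
  have hpA : p ∈ A i₀ := (Finset.mem_inter.mp hpmem).2
  have hpR : D.Reachable x p := hi₀ p hpA
  -- walk from p to y inside H a, crossing the cut
  obtain ⟨w⟩ := (hHtree a).isConnected ⟨p, hpQ⟩ ⟨y, hyQ⟩
  obtain ⟨u, v, huv, hRu, hRv⟩ :=
    walk_crossing (G := H a) (fun z => D.Reachable x z.1) w hpR (by exact hynR)
  refine ⟨a, u, v, huv, ?_⟩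
  have huvne : u.1 ≠ v.1 := fun h => (H a).ne_of_adj huv (Subtype.ext h)
  by_cases hcase : s(u.1, v.1) = s(x, y)
  · rcases Sym2.eq_iff.mp hcase with ⟨hu, hv⟩ | ⟨hu, hv⟩
    · rw [hu, hv]
    · exact absurd (hu ▸ hRu) hynR
  · -- exchange argument
    have hnotTE : s(u.1, v.1) ∉ T.edgeSet := by
      intro hmem
      have : D.Adj u.1 v.1 := by
        simp only [hD, SimpleGraph.deleteEdges_adj, Set.mem_singleton_iff]
        exact ⟨hmem, hcase⟩
      exact hRv (hRu.trans this.reachable)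
    set T' : SimpleGraph V := D ⊔ SimpleGraph.fromEdgeSet {s(u.1, v.1)} with hT'def
    have hDT' : D ≤ T' := le_sup_left
    have hadj' : T'.Adj u.1 v.1 :=
      Or.inr (by simp [SimpleGraph.fromEdgeSet_adj, huvne])
    -- v is in the y-side
    have hRyv : D.Reachable y v.1 := by
      rcases tree_split (T := T) (x := x) (y := y)
          ((hT.isConnected v.1 x).some) with h1 | h1
      · exact absurd h1 hRv
      · exact h1
    -- T' is connected
    have hxall : ∀ z, T'.Reachable x z := by
      intro z
      rcases tree_split (T := T) (x := x) (y := y) ((hT.isConnected z x).some) with h1 | h1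
      · exact h1.mono hDT'
      · exact ((hRu.mono hDT').trans hadj'.reachable).trans
          (((hRyv.symm.trans h1).mono hDT'))
    have hT'conn : T'.Connected := by
      rw [SimpleGraph.connected_iff]
      exact ⟨fun z w => (hxall z).symm.trans (hxall w), hne⟩
    -- T' is acyclic
    have hbr' : T'.IsBridge s(u.1, v.1) := by
      rw [SimpleGraph.isBridge_iff]
      refine fun hr => ?_
      have hle : (T' \ SimpleGraph.fromEdgeSet {s(u.1, v.1)}) ≤ D := by
        intro c d hcd
        rw [SimpleGraph.sdiff_adj] at hcd
        rcases hcd.1 with h1 | h1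
        · exact h1
        · exact absurd h1 hcd.2
      exact hRv (hRu.trans (hr.mono hle))
    have hacyc : T'.IsAcyclic := by
      intro z c hc
      by_cases hm : s(u.1, v.1) ∈ c.edges
      · exact ((SimpleGraph.isBridge_iff_adj_and_forall_cycle_notMem hadj').mp hbr') c hc hm
      · have hsub : ∀ e' ∈ c.edges, e' ∈ D.edgeSet := by
          intro e' he'
          have h1 : e' ∈ T'.edgeSet := c.edges_subset_edgeSet he'
          rw [hT'def, SimpleGraph.edgeSet_sup, SimpleGraph.edgeSet_fromEdgeSet] at h1
          rcases h1 with h1 | h1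
          · exact h1
          · exact absurd (h1.1 ▸ he') hm
        exact hT.IsAcyclic ((c.transfer D hsub).mapLe (SimpleGraph.deleteEdges_le _))
          ((hc.transfer hsub).mapLe _)
    have hT'tree : T'.IsTree := ⟨hT'conn, hacyc⟩
    -- sum comparison
    have hsum := hmin T' hT'tree
    have hF'eq : T'.edgeSet.toFinite.toFinset =
        insert s(u.1, v.1) ((T.edgeSet.toFinite.toFinset).erase s(x, y)) := by
      ext e'
      simp only [Set.Finite.mem_toFinset, Finset.mem_insert, Finset.mem_erase,
        hT'def, SimpleGraph.edgeSet_sup, hD, SimpleGraph.edgeSet_deleteEdges, SimpleGraph.edgeSet_fromEdgeSet,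
        Set.mem_union, Set.mem_diff, Set.mem_singleton_iff, Set.mem_setOf_eq]
      constructor
      · rintro (⟨h1, h2⟩ | ⟨h1, _⟩)
        · exact Or.inr ⟨h2, h1⟩
        · exact Or.inl h1
      · rintro (h1 | ⟨h1, h2⟩)
        · exact Or.inr ⟨h1, by simp [h1, Sym2.mk_isDiag_iff, huvne]⟩
        · exact Or.inl ⟨h2, h1⟩
    have hxyF : s(x, y) ∈ T.edgeSet.toFinite.toFinset := by
      rw [Set.Finite.mem_toFinset]; exact hxy
    have huvnotF : s(u.1, v.1) ∉ (T.edgeSet.toFinite.toFinset).erase s(x, y) := by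
      intro hmem
      exact hnotTE (Set.Finite.mem_toFinset _ |>.mp (Finset.mem_of_mem_erase hmem))
    rw [hF'eq, Finset.sum_insert huvnotF,
      ← Finset.add_sum_erase _ f hxyF] at hsum
    have hle : f s(x, y) ≤ f s(u.1, v.1) := le_of_add_le_add_right hsum
    simpa only [hf, Sym2.lift_mk] using hle
end
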